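/- Let E be a real normed vector space, let f, fEMA, fPsi : E → ℝ → E, let K ≥ 0, γ₁ ≥ 0, γ₂ ≥ 0, M ≥ 0, h > 0, fix X₀, X₁ ∈ E, and for s ∈ ℝ set X_s := s • X₁ + (1 − s) • X₀. Let n : ℕ with n ≥ 1, let t_a, t_b ∈ ℝ with t_b = t_a + n * h, and write t_i := t_a + i * h for 0 ≤ i ≤ n. Suppose that for every i with 1 ≤ i ≤ n: (i) ‖f X_{t_i} t_i − fEMA (X_{t_i} − h • fPsi X_{t_i} t_i) (t_i − h)‖ ≤ γ₁; (ii) for every y ∈ E, ‖f y (t_i − h) − fEMA y (t_i − h)‖ ≤ γ₂; (iii) the map y ↦ f y (t_i − h) is K-Lipschitz; and (iv) ‖fPsi X_{t_i} t_i − (X₁ − X₀)‖ ≤ M. Then ‖f X_{t_b} t_b − f X_{t_a} t_a‖ ≤ ((t_b − t_a) / h) * (γ₁ + γ₂ + K * h * M). -/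

import Mathlib

/-- Theorem 2 of "Catch-Up Distillation": stability bound for catch-up distillation.
Along the interpolation path `X s = s • X₁ + (1 - s) • X₀`, on the grid
`t_i = t_a + i * h` (for `1 ≤ i ≤ n`, with `t_b = t_a + n * h`), the catch-up loss bound `γ₁`,
the EMA-gap bound `γ₂`, `K`-Lipschitzness of `f` in its first argument, and the bound `M` on
the deviation of `fPsi` from the true velocity `X₁ - X₀` yield the stated variation bound. -/
theorem catch_up_distillation_stability
    {E : Type*} [NormedAddCommGroup E] [NormedSpace ℝ E]
    (f fEMA fPsi : E → ℝ → E) (K γ₁ γ₂ M h : ℝ)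
    (hK : 0 ≤ K) (hγ₁ : 0 ≤ γ₁) (hγ₂ : 0 ≤ γ₂) (hM : 0 ≤ M) (hh : 0 < h)
    (X₀ X₁ : E) (X : ℝ → E) (hX : ∀ s : ℝ, X s = s • X₁ + (1 - s) • X₀)
    (n : ℕ) (hn : 1 ≤ n) (ta tb : ℝ) (htb : tb = ta + n * h)
    (h1 : ∀ i : ℕ, 1 ≤ i → i ≤ n →
      ‖f (X (ta + i * h)) (ta + i * h) -
        fEMA (X (ta + i * h) - h • fPsi (X (ta + i * h)) (ta + i * h)) (ta + i * h - h)‖ ≤ γ₁)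
    (h2 : ∀ i : ℕ, 1 ≤ i → i ≤ n → ∀ y : E,
      ‖f y (ta + i * h - h) - fEMA y (ta + i * h - h)‖ ≤ γ₂)
    (h3 : ∀ i : ℕ, 1 ≤ i → i ≤ n → ∀ x y : E,
      ‖f x (ta + i * h - h) - f y (ta + i * h - h)‖ ≤ K * ‖x - y‖)
    (h4 : ∀ i : ℕ, 1 ≤ i → i ≤ n →
      ‖fPsi (X (ta + i * h)) (ta + i * h) - (X₁ - X₀)‖ ≤ M) :
    ‖f (X tb) tb - f (X ta) ta‖ ≤ ((tb - ta) / h) * (γ₁ + γ₂ + K * h * M) := by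
  have key : ∀ m : ℕ, m ≤ n →
      ‖f (X (ta + m * h)) (ta + m * h) - f (X ta) ta‖ ≤ m * (γ₁ + γ₂ + K * h * M) := by
    intro m
    induction m with
    | zero => intro _; simp
    | succ m ih =>
      intro hm
      have hm' : m ≤ n := Nat.le_of_succ_le hm
      have hi1 : 1 ≤ m + 1 := Nat.le_add_left 1 m
      have h1' := h1 (m+1) hi1 hm
      have h2' := h2 (m+1) hi1 hm
      have h3' := h3 (m+1) hi1 hm
      have h4' := h4 (m+1) hi1 hm
      set t : ℝ := ta + ((m : ℝ) + 1) * h with ht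
      have hcast : ta + ((m+1 : ℕ) : ℝ) * h = t := by push_cast [ht]; ring
      rw [hcast] at h1' h2' h3' h4'
      have hts : t - h = ta + (m : ℝ) * h := by rw [ht]; ring
      set y : E := X t - h • fPsi (X t) t with hy
      have hXdiff : X (t - h) = X t - h • (X₁ - X₀) := by
        rw [hX, hX]
        module
      have step : ‖f (X t) t - f (X (t - h)) (t - h)‖ ≤ γ₁ + γ₂ + K * h * M := by
        have tri : ‖f (X t) t - f (X (t - h)) (t - h)‖ ≤
            ‖f (X t) t - fEMA y (t - h)‖ + ‖fEMA y (t - h) - f y (t - h)‖ +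
              ‖f y (t - h) - f (X (t - h)) (t - h)‖ := by
          have := norm_add₃_le (a := f (X t) t - fEMA y (t - h))
            (b := fEMA y (t - h) - f y (t - h)) (c := f y (t - h) - f (X (t - h)) (t - h))
          simpa using this
        refine tri.trans ?_
        have b1 : ‖f (X t) t - fEMA y (t - h)‖ ≤ γ₁ := h1'
        have b2 : ‖fEMA y (t - h) - f y (t - h)‖ ≤ γ₂ := by
          rw [norm_sub_rev]; exact h2' y
        have b3 : ‖f y (t - h) - f (X (t - h)) (t - h)‖ ≤ K * h * M := by
          have := h3' y (X (t - h))
          refine this.trans ?_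
          have hyX : y - X (t - h) = h • ((X₁ - X₀) - fPsi (X t) t) := by
            rw [hy, hXdiff]; module
          rw [hyX, norm_smul, Real.norm_of_nonneg hh.le]
          have : ‖(X₁ - X₀) - fPsi (X t) t‖ ≤ M := by
            rw [norm_sub_rev]; exact h4'
          calc K * (h * ‖(X₁ - X₀) - fPsi (X t) t‖)
              ≤ K * (h * M) := by
                apply mul_le_mul_of_nonneg_left _ hK
                exact mul_le_mul_of_nonneg_left this hh.le
            _ = K * h * M := by ring
        linarith
      have tri2 : ‖f (X t) t - f (X ta) ta‖ ≤
          ‖f (X t) t - f (X (t - h)) (t - h)‖ + ‖f (X (t - h)) (t - h) - f (X ta) ta‖ := by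
        have := norm_sub_le_norm_sub_add_norm_sub (f (X t) t) (f (X (t - h)) (t - h))
          (f (X ta) ta)
        simpa using this
      have ih' := ih hm'
      rw [hts] at tri2 step
      rw [hcast]
      have hfin : ‖f (X t) t - f (X ta) ta‖ ≤ ((m : ℝ) + 1) * (γ₁ + γ₂ + K * h * M) := by
        nlinarith [norm_nonneg (f (X t) t - f (X ta) ta)]
      push_cast
      exact hfin
  have hnkey := key n le_rfl
  have htb' : (tb - ta) / h = (n : ℝ) := by
    rw [htb]; field_simp; ring
  rw [htb', htb]
  exact hnkey
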